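/- Assume J is generated as an A-module by a family {j_μ}_{μ∈M} and J' is generated as an A-module by a family {j'_ν}_{ν∈N}. Then there is a surjective ring homomorphism from the polynomial ring A[{x_μ}_{μ∈M}, {x'_ν}_{ν∈N}] onto A ⋈^{f,g}(J,J'), namely the A-algebra map (via a ↦ (f(a), g(a))) sending x_μ ↦ (j_μ, 0) and x'_ν ↦ (0, j'_ν); in particular A ⋈^{f,g}(J,J') is a homomorphic image of a polynomial ring over A. -/

import Mathlib

open IsLocalRing

variable {A B C : Type} [CommRing A] [CommRing B] [CommRing C]

def BiAmalg (f : A →+* B) (g : A →+* C) (J : Ideal B) (J' : Ideal C) :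
    Subring (B × C) where
  carrier := {x | ∃ a : A, ∃ j ∈ J, ∃ j' ∈ J', x = (f a + j, g a + j')}
  zero_mem' := ⟨0, 0, J.zero_mem, 0, J'.zero_mem, by simp; rfl⟩
  one_mem' := ⟨1, 0, J.zero_mem, 0, J'.zero_mem, by simp; rfl⟩
  add_mem' := by
    rintro x y ⟨a, j, hj, j', hj', rfl⟩ ⟨b, k, hk, k', hk', rfl⟩
    exact ⟨a + b, j + k, J.add_mem hj hk, j' + k', J'.add_mem hj' hk', by
      simp only [Prod.mk_add_mk, map_add, Prod.mk.injEq]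
      constructor <;> ring⟩
  neg_mem' := by
    rintro x ⟨a, j, hj, j', hj', rfl⟩
    exact ⟨-a, -j, J.neg_mem hj, -j', J'.neg_mem hj', by
      simp only [Prod.neg_mk, map_neg, Prod.mk.injEq]
      constructor <;> ring⟩
  mul_mem' := by
    rintro x y ⟨a, j, hj, j', hj', rfl⟩ ⟨b, k, hk, k', hk', rfl⟩
    exact ⟨a * b, f a * k + j * f b + j * k,
      J.add_mem (J.add_mem (J.mul_mem_left _ hk) (J.mul_mem_right _ hj)) (J.mul_mem_right _ hj),
      g a * k' + j' * g b + j' * k',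
      J'.add_mem (J'.add_mem (J'.mul_mem_left _ hk') (J'.mul_mem_right _ hj'))
        (J'.mul_mem_right _ hj'), by
      simp only [Prod.mk_mul_mk, map_mul, Prod.mk.injEq]
      constructor <;> ring⟩

theorem BiAmalg.mem_mk (f : A →+* B) (g : A →+* C) (J : Ideal B) (J' : Ideal C)
    (a : A) {j : B} (hj : j ∈ J) {j' : C} (hj' : j' ∈ J') :
    (f a + j, g a + j') ∈ BiAmalg f g J J' :=
  ⟨a, j, hj, j', hj', rfl⟩

def BiAmalg.incl (f : A →+* B) (g : A →+* C) (J : Ideal B) (J' : Ideal C) :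
    A →+* BiAmalg f g J J' where
  toFun a := ⟨(f a, g a), a, 0, J.zero_mem, 0, J'.zero_mem, by simp⟩
  map_one' := Subtype.ext (by simp)
  map_mul' x y := Subtype.ext (by simp [Prod.mk_mul_mk])
  map_zero' := Subtype.ext (by simp)
  map_add' x y := Subtype.ext (by simp [Prod.mk_add_mk])

instance BiAmalg.moduleA (f : A →+* B) (g : A →+* C) (J : Ideal B) (J' : Ideal C) :
    Module A (BiAmalg f g J J') :=
  Module.compHom _ (BiAmalg.incl f g J J')


/-- If `J` is generated as an `A`-module by `{j_μ}_{μ ∈ M}` and `J'` by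
`{j'_ν}_{ν ∈ N}`, then the `A`-algebra map `A[{x_μ}, {x'_ν}] → A ⋈^{f,g} (J, J')` sending
`x_μ ↦ (j_μ, 0)` and `x'_ν ↦ (0, j'_ν)` is surjective; in particular the bi-amalgamation is a
homomorphic image of a polynomial ring over `A`. -/
theorem biAmalg_surjective_of_polynomial (f : A →+* B) (g : A →+* C) (J : Ideal B) (J' : Ideal C)
    (hI : J.comap f = J'.comap g)
    {M N : Type} (jf : M → J) (j'f : N → J') :
    letI : Module A J := Module.compHom _ f
    letI : Module A J' := Module.compHom _ g
    Submodule.span A (Set.range jf) = ⊤ →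
    Submodule.span A (Set.range j'f) = ⊤ →
    Function.Surjective
      (MvPolynomial.eval₂Hom (BiAmalg.incl f g J J')
        (Sum.elim
          (fun μ => (⟨((jf μ : B), 0),
            ⟨0, jf μ, (jf μ).2, 0, J'.zero_mem, by simp⟩⟩ : BiAmalg f g J J'))
          (fun ν => (⟨(0, (j'f ν : C)),
            ⟨0, 0, J.zero_mem, j'f ν, (j'f ν).2, by simp⟩⟩ : BiAmalg f g J J')))) := by
  letI : Module A J := Module.compHom _ f
  letI : Module A J' := Module.compHom _ g
  intro hJ hJ'
  set φ := (MvPolynomial.eval₂Hom (BiAmalg.incl f g J J')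
        (Sum.elim
          (fun μ => (⟨((jf μ : B), 0),
            ⟨0, jf μ, (jf μ).2, 0, J'.zero_mem, by simp⟩⟩ : BiAmalg f g J J'))
          (fun ν => (⟨(0, (j'f ν : C)),
            ⟨0, 0, J.zero_mem, j'f ν, (j'f ν).2, by simp⟩⟩ : BiAmalg f g J J')))) with hφ
  set S : Subring (B × C) := φ.range.map (BiAmalg f g J J').subtype with hS
  have hmemS : ∀ x : B × C, x ∈ S ↔ ∃ y, ((φ y : BiAmalg f g J J') : B × C) = x := by
    intro x
    constructor
    · rintro ⟨z, ⟨y, rfl⟩, rfl⟩; exact ⟨y, rfl⟩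
    · rintro ⟨y, rfl⟩; exact ⟨φ y, ⟨y, rfl⟩, rfl⟩
  have hincl : ∀ a : A, ((f a, g a) : B × C) ∈ S := by
    intro a
    refine (hmemS _).2 ⟨MvPolynomial.C a, ?_⟩
    simp [hφ, BiAmalg.incl]
  have hJS : ∀ j : J, ((j : B), (0 : C)) ∈ S := by
    intro j
    have hj : j ∈ Submodule.span A (Set.range jf) := hJ ▸ Submodule.mem_top
    refine Submodule.span_induction ?_ ?_ ?_ ?_ hj
    · rintro _ ⟨μ, rfl⟩
      refine (hmemS _).2 ⟨MvPolynomial.X (Sum.inl μ), ?_⟩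
      simp [hφ]
    · exact S.zero_mem
    · intro x y _ _ hx hy
      simpa [Prod.mk_add_mk] using S.add_mem hx hy
    · intro a x _ hx
      have : (((a • x : J) : B), (0 : C)) = ((f a, g a) : B × C) * ((x : B), (0 : C)) := by
        simp [Prod.mk_mul_mk]
        rfl
      rw [this]
      exact S.mul_mem (hincl a) hx
  have hJ'S : ∀ j' : J', ((0 : B), (j' : C)) ∈ S := by
    intro j'
    have hj : j' ∈ Submodule.span A (Set.range j'f) := hJ' ▸ Submodule.mem_top
    refine Submodule.span_induction ?_ ?_ ?_ ?_ hj
    · rintro _ ⟨ν, rfl⟩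
      refine (hmemS _).2 ⟨MvPolynomial.X (Sum.inr ν), ?_⟩
      simp [hφ]
    · exact S.zero_mem
    · intro x y _ _ hx hy
      simpa [Prod.mk_add_mk] using S.add_mem hx hy
    · intro a x _ hx
      have : ((0 : B), ((a • x : J') : C)) = ((f a, g a) : B × C) * ((0 : B), (x : C)) := by
        simp [Prod.mk_mul_mk]
        rfl
      rw [this]
      exact S.mul_mem (hincl a) hx
  rintro ⟨x, a, j, hj, j', hj', rfl⟩
  have : ((f a + j, g a + j') : B × C) ∈ S := by
    have := S.add_mem (S.add_mem (hincl a) (hJS ⟨j, hj⟩)) (hJ'S ⟨j', hj'⟩)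
    simpa [Prod.mk_add_mk] using this
  obtain ⟨y, hy⟩ := (hmemS _).1 this
  exact ⟨y, Subtype.ext hy⟩
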